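/- (Theorem 1.1) Let H be a complex Hilbert space and L, M closed linear subspaces with Q = L ∩ M, satisfying (1) c = c(L,M) < 1 and (2) the orthogonal complement of L + M in H is {0}. Then every vector x ∈ H can be represented as x = x_L + x_M with x_L ∈ L, x_M ∈ M, such that ‖x_L‖ ≤ A₁‖x‖ and ‖x_M‖ ≤ A₂‖x‖, where A₁ = a₁ + 1/√(1 − c²), A₂ = a₂ + 1/√(1 − c²) with 0 ≤ a₁, a₂ ≤ 1; moreover one may take a₁ = a₂ = 0 if L ∩ M = {0}. -/

import Mathlib

open scoped InnerProductSpace Pointwise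

/-- The inclination `c(L,M)` of two subspaces `L`, `M` of a complex Hilbert space:
the supremum of `|⟪u,v⟫| / (‖u‖‖v‖)` over nonzero `u ∈ L ⊖ Q` and nonzero `v ∈ M ⊖ Q`,
where `Q = L ⊓ M` and `L ⊖ Q = L ⊓ Qᗮ`, `M ⊖ Q = M ⊓ Qᗮ`. -/
noncomputable def inclination {H : Type*} [NormedAddCommGroup H] [InnerProductSpace ℂ H]
    (L M : Submodule ℂ H) : ℝ :=
  sSup {r : ℝ | ∃ u ∈ L ⊓ (L ⊓ M)ᗮ, ∃ v ∈ M ⊓ (L ⊓ M)ᗮ,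
    u ≠ 0 ∧ v ≠ 0 ∧ r = ‖⟪u, v⟫_ℂ‖ / (‖u‖ * ‖v‖)}

set_option maxHeartbeats 1000000 in
theorem stmt_4 {H : Type*} [NormedAddCommGroup H] [InnerProductSpace ℂ H] [CompleteSpace H]
    (L M : Submodule ℂ H) (hL : IsClosed (L : Set H)) (hM : IsClosed (M : Set H))
    (hLQ : ∃ u ∈ L ⊓ (L ⊓ M)ᗮ, u ≠ 0) (hMQ : ∃ v ∈ M ⊓ (L ⊓ M)ᗮ, v ≠ 0)
    (hc : inclination L M < 1) (horth : (L ⊔ M)ᗮ = ⊥) :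
    ∃ a₁ a₂ : ℝ, 0 ≤ a₁ ∧ a₁ ≤ 1 ∧ 0 ≤ a₂ ∧ a₂ ≤ 1 ∧
      (L ⊓ M = ⊥ → a₁ = 0 ∧ a₂ = 0) ∧
      ∀ x : H, ∃ xL ∈ L, ∃ xM ∈ M, x = xL + xM ∧
        ‖xL‖ ≤ (a₁ + 1 / Real.sqrt (1 - inclination L M ^ 2)) * ‖x‖ ∧
        ‖xM‖ ≤ (a₂ + 1 / Real.sqrt (1 - inclination L M ^ 2)) * ‖x‖ := by
  classical
  set c := inclination L M with hcdef
  set S : Set ℝ := {r : ℝ | ∃ u ∈ L ⊓ (L ⊓ M)ᗮ, ∃ v ∈ M ⊓ (L ⊓ M)ᗮ,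
    u ≠ 0 ∧ v ≠ 0 ∧ r = ‖⟪u, v⟫_ℂ‖ / (‖u‖ * ‖v‖)} with hSdef
  have hcS : c = sSup S := rfl
  -- boundedness of S
  have hSbdd : BddAbove S := by
    refine ⟨1, ?_⟩
    rintro r ⟨u, hu, v, hv, hu0, hv0, rfl⟩
    have hup : (0:ℝ) < ‖u‖ := norm_pos_iff.mpr hu0
    have hvp : (0:ℝ) < ‖v‖ := norm_pos_iff.mpr hv0
    rw [div_le_one (by positivity)]
    exact norm_inner_le_norm (𝕜 := ℂ) u v
  have hSne : S.Nonempty := by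
    obtain ⟨u, hu, hu0⟩ := hLQ
    obtain ⟨v, hv, hv0⟩ := hMQ
    exact ⟨_, u, hu, v, hv, hu0, hv0, rfl⟩
  have hc0 : 0 ≤ c := by
    obtain ⟨r, hr⟩ := hSne
    have hrle : r ≤ c := le_csSup hSbdd hr
    obtain ⟨u, hu, v, hv, hu0, hv0, rfl⟩ := hr
    exact le_trans (by positivity) hrle
  -- key inner product bound
  have hkey : ∀ u ∈ L ⊓ (L ⊓ M)ᗮ, ∀ v ∈ M ⊓ (L ⊓ M)ᗮ,
      ‖⟪u, v⟫_ℂ‖ ≤ c * (‖u‖ * ‖v‖) := by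
    intro u hu v hv
    by_cases hu0 : u = 0
    · simp [hu0]
    by_cases hv0 : v = 0
    · simp [hv0]
    have hmem : ‖⟪u, v⟫_ℂ‖ / (‖u‖ * ‖v‖) ∈ S := ⟨u, hu, v, hv, hu0, hv0, rfl⟩
    have hle : ‖⟪u, v⟫_ℂ‖ / (‖u‖ * ‖v‖) ≤ c := le_csSup hSbdd hmem
    have hup : (0:ℝ) < ‖u‖ := norm_pos_iff.mpr hu0
    have hvp : (0:ℝ) < ‖v‖ := norm_pos_iff.mpr hv0
    rwa [div_le_iff₀ (by positivity)] at hle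
  set d : ℝ := 1 - c ^ 2 with hddef
  have hd0 : 0 < d := by nlinarith
  have hd1 : d ≤ 1 := by nlinarith
  -- the quantitative lower bound
  have hineq : ∀ u ∈ L ⊓ (L ⊓ M)ᗮ, ∀ v ∈ M ⊓ (L ⊓ M)ᗮ,
      d * ‖u‖ ^ 2 ≤ ‖u + v‖ ^ 2 ∧ d * ‖v‖ ^ 2 ≤ ‖u + v‖ ^ 2 := by
    intro u hu v hv
    have hk := hkey u hu v hv
    have hre : -(c * (‖u‖ * ‖v‖)) ≤ RCLike.re ⟪u, v⟫_ℂ := by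
      have h1 : |RCLike.re ⟪u, v⟫_ℂ| ≤ ‖⟪u, v⟫_ℂ‖ := RCLike.abs_re_le_norm _
      have h2 := neg_abs_le (RCLike.re ⟪u, v⟫_ℂ)
      linarith
    have hexp : ‖u + v‖ ^ 2 = ‖u‖ ^ 2 + 2 * RCLike.re ⟪u, v⟫_ℂ + ‖v‖ ^ 2 :=
      norm_add_sq (𝕜 := ℂ) u v
    constructor
    · nlinarith [sq_nonneg (c * ‖u‖ - ‖v‖), norm_nonneg u, norm_nonneg v]
    · nlinarith [sq_nonneg (c * ‖v‖ - ‖u‖), norm_nonneg u, norm_nonneg v]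
  -- closedness / completeness setup
  have hQclosed : IsClosed ((L ⊓ M : Submodule ℂ H) : Set H) := by
    rw [Submodule.coe_inf]; exact hL.inter hM
  haveI : CompleteSpace (L ⊓ M : Submodule ℂ H) := hQclosed.completeSpace_coe
  have hL'closed : IsClosed ((L ⊓ (L ⊓ M)ᗮ : Submodule ℂ H) : Set H) := by
    rw [Submodule.coe_inf]; exact hL.inter (L ⊓ M).isClosed_orthogonal
  have hM'closed : IsClosed ((M ⊓ (L ⊓ M)ᗮ : Submodule ℂ H) : Set H) := by
    rw [Submodule.coe_inf]; exact hM.inter (L ⊓ M).isClosed_orthogonal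
  haveI : CompleteSpace (L ⊓ (L ⊓ M)ᗮ : Submodule ℂ H) := hL'closed.completeSpace_coe
  haveI : CompleteSpace (M ⊓ (L ⊓ M)ᗮ : Submodule ℂ H) := hM'closed.completeSpace_coe
  -- the linear map (q, u, v) ↦ q + u + v
  let T : ((L ⊓ M : Submodule ℂ H) × (L ⊓ (L ⊓ M)ᗮ : Submodule ℂ H) ×
      (M ⊓ (L ⊓ M)ᗮ : Submodule ℂ H)) →ₗ[ℂ] H :=
    { toFun := fun z => (z.1 : H) + (z.2.1 : H) + (z.2.2 : H)
      map_add' := by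
        intro a b
        simp only [Prod.fst_add, Prod.snd_add, Submodule.coe_add]
        abel
      map_smul' := by
        intro r a
        simp only [Prod.smul_fst, Prod.smul_snd, Submodule.coe_smul, RingHom.id_apply, smul_add] }
  -- auxiliary: orthogonality of the Q part
  have hperp : ∀ (q : H), q ∈ (L ⊓ M : Submodule ℂ H) → ∀ (w : H), w ∈ (L ⊓ M)ᗮ →
      ‖q + w‖ ^ 2 = ‖q‖ ^ 2 + ‖w‖ ^ 2 := by
    intro q hq w hw
    have h0 : ⟪q, w⟫_ℂ = 0 := hw q hq
    have := norm_add_sq (𝕜 := ℂ) q w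
    rw [h0] at this
    simpa using this
  -- lower bound for T
  have hTlow : ∀ z, Real.sqrt (d / 2) * ‖z‖ ≤ ‖T z‖ := by
    rintro ⟨q, u, v⟩
    have hq : (q : H) ∈ (L ⊓ M : Submodule ℂ H) := q.2
    have hu : (u : H) ∈ L ⊓ (L ⊓ M)ᗮ := u.2
    have hv : (v : H) ∈ M ⊓ (L ⊓ M)ᗮ := v.2
    have huv : ((u : H) + v) ∈ (L ⊓ M)ᗮ := Submodule.add_mem _ hu.2 hv.2
    have h1 : ‖(q : H) + ((u : H) + v)‖ ^ 2 = ‖(q : H)‖ ^ 2 + ‖(u : H) + v‖ ^ 2 :=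
      hperp q hq _ huv
    have h2 := hineq (u : H) hu (v : H) hv
    have hznorm : ‖(⟨q, u, v⟩ : (L ⊓ M : Submodule ℂ H) × (L ⊓ (L ⊓ M)ᗮ : Submodule ℂ H) ×
        (M ⊓ (L ⊓ M)ᗮ : Submodule ℂ H))‖ = max ‖(q : H)‖ (max ‖(u : H)‖ ‖(v : H)‖) := by
      simp [Prod.norm_def]
    have hTz : ‖T ⟨q, u, v⟩‖ = ‖(q : H) + ((u : H) + v)‖ := by
      show ‖(q : H) + (u : H) + (v : H)‖ = _
      rw [add_assoc]
    rw [hznorm, hTz]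
    have hm : max ‖(q : H)‖ (max ‖(u : H)‖ ‖(v : H)‖) ^ 2
        ≤ ‖(q : H)‖ ^ 2 + ‖(u : H)‖ ^ 2 + ‖(v : H)‖ ^ 2 := by
      rcases max_cases ‖(q : H)‖ (max ‖(u : H)‖ ‖(v : H)‖) with ⟨h, _⟩ | ⟨h, _⟩ <;>
        rcases max_cases ‖(u : H)‖ ‖(v : H)‖ with ⟨h', _⟩ | ⟨h', _⟩ <;>
        rw [h] <;> first
          | nlinarith [norm_nonneg (q : H), norm_nonneg (u : H), norm_nonneg (v : H)]
          | (rw [h'] <;> nlinarith [norm_nonneg (q : H), norm_nonneg (u : H), norm_nonneg (v : H)])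
    have hsq : (Real.sqrt (d / 2) * max ‖(q : H)‖ (max ‖(u : H)‖ ‖(v : H)‖)) ^ 2
        ≤ ‖(q : H) + ((u : H) + v)‖ ^ 2 := by
      rw [mul_pow, Real.sq_sqrt (by positivity)]
      nlinarith [h2.1, h2.2, norm_nonneg ((u : H) + v)]
    have hnn : 0 ≤ Real.sqrt (d / 2) * max ‖(q : H)‖ (max ‖(u : H)‖ ‖(v : H)‖) := by
      positivity
    nlinarith [norm_nonneg ((q : H) + ((u : H) + v)), hsq]
  -- T is antilipschitz and lipschitz
  have hanti : AntilipschitzWith (Real.sqrt (d / 2))⁻¹.toNNReal T := by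
    apply AddMonoidHomClass.antilipschitz_of_bound
    intro z
    have h := hTlow z
    have hs : (0:ℝ) < Real.sqrt (d / 2) := Real.sqrt_pos.mpr (by positivity)
    rw [Real.coe_toNNReal _ (by positivity)]
    rw [inv_mul_eq_div, le_div_iff₀ hs]
    linarith
  have hlip : LipschitzWith (3:ℝ).toNNReal T := by
    apply AddMonoidHomClass.lipschitz_of_bound
    rintro ⟨q, u, v⟩
    have hq : ‖(q : H)‖ ≤ ‖(⟨q, u, v⟩ : _ × _ × _)‖ := le_max_left _ _
    have hu : ‖(u : H)‖ ≤ ‖(⟨q, u, v⟩ : _ × _ × _)‖ :=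
      le_trans (le_max_left _ _) (le_max_right _ _)
    have hv : ‖(v : H)‖ ≤ ‖(⟨q, u, v⟩ : _ × _ × _)‖ :=
      le_trans (le_max_right _ _) (le_max_right _ _)
    calc ‖T ⟨q, u, v⟩‖ ≤ ‖(q : H)‖ + ‖(u : H)‖ + ‖(v : H)‖ := by
          exact le_trans (norm_add_le _ _) (by gcongr; exact norm_add_le _ _)
      _ ≤ 3 * ‖(⟨q, u, v⟩ : _ × _ × _)‖ := by
          push_cast; linarith
  -- range of T is L ⊔ M
  have hrange : Set.range T = ((L ⊔ M : Submodule ℂ H) : Set H) := by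
    ext x
    constructor
    · rintro ⟨⟨q, u, v⟩, rfl⟩
      show ((q : H) + u + v) ∈ (L ⊔ M : Submodule ℂ H)
      refine Submodule.add_mem _ (Submodule.add_mem _ ?_ ?_) ?_
      · exact Submodule.mem_sup_left q.2.1
      · exact Submodule.mem_sup_left u.2.1
      · exact Submodule.mem_sup_right v.2.1
    · intro hx
      obtain ⟨l, hl, m, hm, rfl⟩ := Submodule.mem_sup.mp hx
      set P := Submodule.orthogonalProjectionOnto (L ⊓ M : Submodule ℂ H) with hP
      refine ⟨⟨⟨(P l : H) + (P m : H), Submodule.add_mem _ (P l).2 (P m).2⟩,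
        ⟨l - P l, Submodule.mem_inf.mpr ⟨Submodule.sub_mem _ hl ((P l).2.1),
          Submodule.sub_starProjection_mem_orthogonal (K := L ⊓ M) l⟩⟩,
        ⟨m - P m, Submodule.mem_inf.mpr ⟨Submodule.sub_mem _ hm ((P m).2.2),
          Submodule.sub_starProjection_mem_orthogonal (K := L ⊓ M) m⟩⟩⟩, ?_⟩
      show ((P l : H) + (P m : H)) + (l - P l) + (m - P m) = l + m
      abel
  have hclosed : IsClosed ((L ⊔ M : Submodule ℂ H) : Set H) := by
    rw [← hrange]
    exact hanti.isClosed_range hlip.uniformContinuous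
  haveI : CompleteSpace (L ⊔ M : Submodule ℂ H) := hclosed.completeSpace_coe
  have htop : (L ⊔ M : Submodule ℂ H) = ⊤ := Submodule.orthogonal_eq_bot_iff.mp horth
  -- the decomposition of an arbitrary x
  refine ⟨if L ⊓ M = ⊥ then 0 else 1, 0, by split <;> norm_num, by split <;> norm_num,
    le_refl _, zero_le_one, fun h => by simp [h], ?_⟩
  intro x
  have hx : x ∈ Set.range T := by
    rw [hrange]
    simp [htop]
  obtain ⟨⟨q, u, v⟩, hz⟩ := hx
  have hq : (q : H) ∈ (L ⊓ M : Submodule ℂ H) := q.2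
  have hu : (u : H) ∈ L ⊓ (L ⊓ M)ᗮ := u.2
  have hv : (v : H) ∈ M ⊓ (L ⊓ M)ᗮ := v.2
  have hxeq : x = (q : H) + ((u : H) + v) := by
    rw [← hz]; show (q : H) + (u : H) + (v : H) = _; rw [add_assoc]
  have huv : ((u : H) + v) ∈ (L ⊓ M)ᗮ := Submodule.add_mem _ hu.2 hv.2
  have hpyth : ‖x‖ ^ 2 = ‖(q : H)‖ ^ 2 + ‖(u : H) + v‖ ^ 2 := by
    rw [hxeq]; exact hperp q hq _ huv
  have h2 := hineq (u : H) hu (v : H) hv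
  have hqle : ‖(q : H)‖ ≤ ‖x‖ := by
    nlinarith [norm_nonneg x, norm_nonneg (q : H), norm_nonneg ((u : H) + v)]
  have huvle : ‖(u : H) + v‖ ≤ ‖x‖ := by
    nlinarith [norm_nonneg x, norm_nonneg (q : H), norm_nonneg ((u : H) + v)]
  have hsd : (0:ℝ) < Real.sqrt d := Real.sqrt_pos.mpr hd0
  have hule : ‖(u : H)‖ ≤ 1 / Real.sqrt d * ‖x‖ := by
    rw [one_div, inv_mul_eq_div, le_div_iff₀ hsd]
    nlinarith [Real.sq_sqrt hd0.le, norm_nonneg (u : H), norm_nonneg x, h2.1,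
      mul_nonneg (norm_nonneg (u : H)) hsd.le]
  have hvle : ‖(v : H)‖ ≤ 1 / Real.sqrt d * ‖x‖ := by
    rw [one_div, inv_mul_eq_div, le_div_iff₀ hsd]
    nlinarith [Real.sq_sqrt hd0.le, norm_nonneg (v : H), norm_nonneg x, h2.2,
      mul_nonneg (norm_nonneg (v : H)) hsd.le]
  refine ⟨(q : H) + u, Submodule.add_mem _ hq.1 hu.1, v, hv.1, by rw [hxeq]; exact (add_assoc _ _ _).symm, ?_, ?_⟩
  · have hqbound : ‖(q : H)‖ ≤ (if L ⊓ M = ⊥ then (0:ℝ) else 1) * ‖x‖ := by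
      split
      · next hbot =>
          have h0 : (q : H) = 0 := by
            simpa only [hbot, Submodule.mem_bot] using hq
          simp [h0]
      · simpa using hqle
    calc ‖(q : H) + u‖ ≤ ‖(q : H)‖ + ‖(u : H)‖ := norm_add_le _ _
      _ ≤ (if L ⊓ M = ⊥ then (0:ℝ) else 1) * ‖x‖ + 1 / Real.sqrt d * ‖x‖ := by
          exact add_le_add hqbound hule
      _ = ((if L ⊓ M = ⊥ then (0:ℝ) else 1) + 1 / Real.sqrt d) * ‖x‖ := by ring
  · calc ‖(v : H)‖ ≤ 1 / Real.sqrt d * ‖x‖ := hvle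
      _ = (0 + 1 / Real.sqrt d) * ‖x‖ := by ring
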